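/- The map from ST-structures to Chu spaces over 3 = {0, ½, 1}, sending each ST-configuration (S,T) to the state assigning 1 to events in T, ½ to events in S\T, and 0 to events outside S, is a bijection between ST-structures over E and subsets of 3^E (i.e., Chu spaces over 3 with event set E), after quotienting by the ST ⇒ (S,S) closure being matched by the corresponding closure on states. -/
import Mathlib


/-- An ST-configuration over `E` is a pair of finite sets of events. -/
abbrev STConfig (E : Type*) := Finset E × Finset E

/-- The three truth values `0 < ½ < 1` of Chu spaces over 3. -/
inductive Tri : Type
  | zero | half | one
deriving DecidableEq

variable {E : Type*} [DecidableEq E]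

/-- The state of a Chu space over 3 associated to an ST-configuration `(S,T)`
(with `T ⊆ S`): events in `T` get `1`, events in `S \ T` get `½`, events
outside `S` get `0`. The support `{e | x e ≠ 0}` is finite. -/
def chuOf (c : {c : STConfig E // c.2 ⊆ c.1}) :
    {x : E → Tri // {e | x e ≠ Tri.zero}.Finite} :=
  ⟨fun e => if e ∈ c.1.2 then Tri.one else if e ∈ c.1.1 then Tri.half else Tri.zero,
   Set.Finite.subset c.1.1.finite_toSet (by
     intro e he
     simp only [Set.mem_setOf_eq] at he
     by_contra hS
     apply he
     have hS' : e ∉ c.1.1 := by simpa using hS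
     have hT : e ∉ c.1.2 := fun h => hS' (c.2 h)
     simp [hS', hT])⟩

/-- Raising all `½` values of a finite-support state to `1`
(corresponding to `(S,T) ↦ (S,S)`). -/
def raiseChu (x : {x : E → Tri // {e | x e ≠ Tri.zero}.Finite}) :
    {x : E → Tri // {e | x e ≠ Tri.zero}.Finite} :=
  ⟨fun e => if x.1 e = Tri.half then Tri.one else x.1 e,
   x.2.subset (by
     intro e he
     simp only [Set.mem_setOf_eq] at he ⊢
     intro h
     apply he
     rw [h]
     decide)⟩

lemma chuOf_inj : Function.Injective (chuOf (E := E)) := by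
  rintro ⟨⟨S, T⟩, hTS⟩ ⟨⟨S', T'⟩, hTS'⟩ h
  have hf : ∀ e, (chuOf ⟨(S, T), hTS⟩).1 e = (chuOf ⟨(S', T'), hTS'⟩).1 e := by
    intro e; rw [h]
  have hT : T = T' := by
    ext e
    have := hf e
    simp only [chuOf] at this
    constructor <;> intro he
    · by_contra he'
      simp [he, he'] at this
      split at this <;> simp_all
    · by_contra he'
      simp [he, he'] at this
      split at this <;> simp_all
  have hS : S = S' := by
    ext e
    have := hf e
    simp only [chuOf] at this
    constructor <;> intro he
    · by_cases heT : e ∈ T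
      · exact hTS' (hT ▸ heT)
      · by_contra he'
        have heT' : e ∉ T' := hT ▸ heT
        simp [he, he', heT, heT'] at this
    · by_cases heT : e ∈ T'
      · exact hTS (hT ▸ heT)
      · by_contra he'
        have heT' : e ∉ T := hT ▸ heT
        simp [he, he', heT, heT'] at this
  subst hT hS
  rfl

lemma chuOf_surj : Function.Surjective (chuOf (E := E)) := by
  rintro ⟨x, hx⟩
  refine ⟨⟨(hx.toFinset, hx.toFinset.filter (fun e => x e = Tri.one)),
    Finset.filter_subset _ _⟩, ?_⟩
  apply Subtype.ext
  funext e
  simp only [chuOf, Finset.mem_filter, Set.Finite.mem_toFinset, Set.mem_setOf_eq]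
  cases h : x e <;> simp [h]

lemma raise_chuOf (c : {c : STConfig E // c.2 ⊆ c.1}) :
    raiseChu (chuOf c) =
      chuOf (⟨(c.1.1, c.1.1), Finset.Subset.refl _⟩ : {c : STConfig E // c.2 ⊆ c.1}) := by
  apply Subtype.ext
  funext e
  simp only [raiseChu, chuOf]
  by_cases hT : e ∈ c.1.2
  · simp [hT, c.2 hT]
  · by_cases hS : e ∈ c.1.1 <;> simp [hT, hS]

/-- the translation of ST-configurations into states over
`3 = {0,½,1}` is a bijection onto the finite-support states; consequently taking
images is a bijection between sets of ST-configurations and Chu spaces over 3,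
and the ST-structure closure `(S,T) ∈ ST ⇒ (S,S) ∈ ST` corresponds exactly to
the closure of the Chu space under raising `½` to `1`. -/
theorem st_chu3_iso (E : Type) [DecidableEq E] :
    Function.Bijective (chuOf (E := E)) ∧
    Function.Bijective
      (fun ST : Set {c : STConfig E // c.2 ⊆ c.1} => chuOf '' ST) ∧
    ∀ ST : Set {c : STConfig E // c.2 ⊆ c.1},
      (∀ c ∈ ST,
        (⟨(c.1.1, c.1.1), Finset.Subset.refl _⟩ : {c : STConfig E // c.2 ⊆ c.1}) ∈ ST)
      ↔ (∀ x ∈ chuOf '' ST, raiseChu x ∈ chuOf '' ST) := by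
  have hbij : Function.Bijective (chuOf (E := E)) := ⟨chuOf_inj, chuOf_surj⟩
  refine ⟨hbij, ⟨fun A B h => ?_, fun X => ?_⟩, fun ST => ?_⟩
  · exact (Set.image_injective.mpr hbij.1) h
  · exact ⟨chuOf ⁻¹' X, Set.image_preimage_eq X hbij.2⟩
  · constructor
    · rintro h x ⟨c, hc, rfl⟩
      rw [raise_chuOf]
      exact ⟨_, h c hc, rfl⟩
    · intro h c hc
      obtain ⟨c', hc', hc'eq⟩ := h (chuOf c) ⟨c, hc, rfl⟩
      rw [raise_chuOf] at hc'eq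
      rwa [chuOf_inj hc'eq] at hc'
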